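/- If μ is a B-measure on the boundary of an origin-symmetric planar convex body K, then the support of μ is contained in the set of Auerbach points of K. -/

import Mathlib

open Set MeasureTheory Pointwise

abbrev Plane := ℝ × ℝ

/-- An origin-symmetric convex body in the plane: compact, convex,
nonempty interior, symmetric about the origin. -/
def IsSymmConvexBody (K : Set Plane) : Prop :=
  Convex ℝ K ∧ IsCompact K ∧ (interior K).Nonempty ∧ K = -K

/-- Birkhoff orthogonality with respect to the norm induced by `K`
(whose Minkowski functional is `gauge K`). -/
def BOrth (K : Set Plane) (x y : Plane) : Prop :=
  ∀ t : ℝ, gauge K x ≤ gauge K (x + t • y)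

/-- The set of Auerbach points of `K`. -/
def Auerbach (K : Set Plane) : Set Plane :=
  {x | x ∈ frontier K ∧ ∃ y ∈ frontier K, BOrth K x y ∧ BOrth K y x}

/-- `E(K)`: the union of the open non-degenerate segments contained in `∂K`. -/
def SegUnion (K : Set Plane) : Set Plane :=
  {x | ∃ a b : Plane, a ≠ b ∧ segment ℝ a b ⊆ frontier K ∧ x ∈ openSegment ℝ a b}

/-- A closed antipode-free arc of `∂K` with endpoints `x` and `y`:
a closed connected subset of `∂K` containing `x` and `y`, containing no
pair of antipodal points, and minimal with these properties. -/
def IsBArc (K C : Set Plane) (x y : Plane) : Prop :=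
  C ⊆ frontier K ∧ IsClosed C ∧ IsPreconnected C ∧ x ∈ C ∧ y ∈ C ∧
  (∀ z ∈ C, -z ∉ C) ∧
  ∀ C' ⊆ C, IsClosed C' → IsPreconnected C' → x ∈ C' → y ∈ C' → C' = C

/-- An angular measure on `∂K`. -/
def IsAngularMeasure (K : Set Plane) (μ : Measure Plane) : Prop :=
  μ (frontier K) = ENNReal.ofReal (2 * Real.pi) ∧
  μ (frontier K)ᶜ = 0 ∧
  (∀ X : Set Plane, μ (-X) = μ X) ∧
  (∀ x : Plane, μ {x} = 0)

/-- A B-measure: an angular measure giving `π/2` to every closed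
antipode-free arc whose endpoints are Birkhoff orthogonal. -/
def IsBMeasure (K : Set Plane) (μ : Measure Plane) : Prop :=
  IsAngularMeasure K μ ∧
  ∀ C x y, IsBArc K C x y → BOrth K x y → μ C = ENNReal.ofReal (Real.pi / 2)

/-- The support of a Borel measure: the points all of whose open
neighborhoods have positive measure. -/
def msupp {α : Type*} [TopologicalSpace α] [MeasurableSpace α]
    (μ : Measure α) : Set α :=
  {x | ∀ U : Set α, IsOpen U → x ∈ U → 0 < μ U}


namespace BP
open Real

variable {K : Set Plane} {μ : MeasureTheory.Measure Plane}

theorem symm_mem (hK : IsSymmConvexBody K) {x : Plane} (hx : x ∈ K) : -x ∈ K := by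
  rw [hK.2.2.2, Set.mem_neg, neg_neg]; exact hx

theorem zero_interior (hK : IsSymmConvexBody K) : (0 : Plane) ∈ interior K := by
  obtain ⟨x, hx⟩ := hK.2.2.1
  have hnx : -x ∈ interior K := by
    have h1 : x ∈ interior (-K) := by rw [← hK.2.2.2]; exact hx
    have h2 : interior (-K) = -(interior K) := ((Homeomorph.neg Plane).preimage_interior K).symm
    rw [h2, Set.mem_neg] at h1
    exact h1
  have h0 : (0 : Plane) = (1/2 : ℝ) • x + (1/2 : ℝ) • (-x) := by module
  rw [h0]
  exact (hK.1.interior) hx hnx (by norm_num) (by norm_num) (by norm_num)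

theorem K_nhds (hK : IsSymmConvexBody K) : K ∈ nhds (0 : Plane) :=
  mem_interior_iff_mem_nhds.1 (zero_interior hK)

theorem gauge_cont (hK : IsSymmConvexBody K) : Continuous (gauge K) :=
  continuous_gauge hK.1 (K_nhds hK)

theorem gauge_sym (hK : IsSymmConvexBody K) (x : Plane) : gauge K (-x) = gauge K x :=
  gauge_neg (fun _ h => symm_mem hK h) x

theorem gauge_pos' (hK : IsSymmConvexBody K) {x : Plane} (hx : x ≠ 0) : 0 < gauge K x := by
  rw [gauge_pos (absorbent_nhds_zero (K_nhds hK))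
    (by rw [NormedSpace.isVonNBounded_iff]; exact hK.2.1.isBounded)]
  exact hx

theorem gauge_frontier (hK : IsSymmConvexBody K) {x : Plane} :
    gauge K x = 1 ↔ x ∈ frontier K :=
  gauge_eq_one_iff_mem_frontier hK.1 (K_nhds hK)

theorem gauge_interior (hK : IsSymmConvexBody K) {x : Plane} :
    gauge K x < 1 ↔ x ∈ interior K :=
  gauge_lt_one_iff_mem_interior hK.1 (K_nhds hK)

theorem frontier_sub (hK : IsSymmConvexBody K) : frontier K ⊆ K := by
  rw [hK.2.1.isClosed.frontier_eq]; exact diff_subset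

theorem frontier_ne_zero (hK : IsSymmConvexBody K) {x : Plane} (hx : x ∈ frontier K) :
    x ≠ 0 := by
  rintro rfl
  rw [hK.2.1.isClosed.frontier_eq] at hx
  exact hx.2 (zero_interior hK)

theorem gauge_smul' (hK : IsSymmConvexBody K) (c : ℝ) (x : Plane) :
    gauge K (c • x) = |c| * gauge K x := by
  rcases le_or_gt 0 c with h | h
  · rw [gauge_smul_of_nonneg h, abs_of_nonneg h]; rfl
  · have : c • x = -((-c) • x) := by module
    rw [this, gauge_sym hK, gauge_smul_of_nonneg (by linarith), abs_of_neg h]; rfl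

theorem mem_K_iff_gauge_le (hK : IsSymmConvexBody K) {x : Plane} :
    x ∈ K ↔ gauge K x ≤ 1 := by
  constructor
  · exact fun h => gauge_le_one_of_mem h
  · intro h
    have := gauge_le_one_iff_mem_closure hK.1 (K_nhds hK) |>.1 h
    rwa [hK.2.1.isClosed.closure_eq] at this


noncomputable def ee (θ : ℝ) : Plane := (Real.cos θ, Real.sin θ)

theorem ee_cont : Continuous ee := by unfold ee; fun_prop

theorem ee_ne (θ : ℝ) : ee θ ≠ 0 := by
  intro h
  have h1 : Real.cos θ = 0 := congrArg Prod.fst h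
  have h2 : Real.sin θ = 0 := congrArg Prod.snd h
  have := Real.sin_sq_add_cos_sq θ
  rw [h1, h2] at this; norm_num at this

theorem ee_pi (θ : ℝ) : ee (θ + π) = -ee θ := by
  unfold ee
  rw [Real.cos_add_pi, Real.sin_add_pi]
  rfl

theorem ee_two_pi (θ : ℝ) : ee (θ + 2*π) = ee θ := by
  have : θ + 2*π = (θ + π) + π := by ring
  rw [this, ee_pi, ee_pi, neg_neg]

theorem ee_inj {s t : ℝ} (h : ee s = ee t) : ∃ n : ℤ, s = t + n * (2*π) := by
  have h1 : Real.cos s = Real.cos t := congrArg Prod.fst h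
  have h2 : Real.sin s = Real.sin t := congrArg Prod.snd h
  have : Real.cos (s - t) = 1 := by
    rw [Real.cos_sub, h1, h2]
    nlinarith [Real.sin_sq_add_cos_sq t]
  obtain ⟨n, hn⟩ := Real.cos_eq_one_iff _ |>.1 this
  exact ⟨n, by linarith⟩

theorem ee_int_pi (θ : ℝ) (k : ℤ) : ee (θ + k * π) = ((-1:ℝ)^k) • ee θ := by
  unfold ee
  rw [Real.cos_add_int_mul_pi, Real.sin_add_int_mul_pi]
  simp [Prod.smul_def, smul_eq_mul]


/-- polar decomposition -/
theorem polar {u : Plane} (hu : u ≠ 0) : ∃ (r : ℝ) (θ : ℝ), 0 < r ∧ u = r • ee θ := by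
  classical
  set z : ℂ := ⟨u.1, u.2⟩ with hz
  have hz0 : z ≠ 0 := by
    intro h
    apply hu
    have h1 : u.1 = 0 := congrArg Complex.re h
    have h2 : u.2 = 0 := congrArg Complex.im h
    exact Prod.ext h1 h2
  refine ⟨‖z‖, Complex.arg z, norm_pos_iff.mpr hz0, ?_⟩
  have hc := Complex.cos_arg hz0
  have hs := Complex.sin_arg z
  have habs : (0:ℝ) < ‖z‖ := norm_pos_iff.mpr hz0
  unfold ee
  rw [Prod.smul_def]
  apply Prod.ext <;> simp only [smul_eq_mul]
  · rw [hc]; field_simp; rfl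
  · rw [hs]; field_simp; rfl

/-- find a direction parallel to u in any half-open window of length π -/
theorem dir_exists {u : Plane} (hu : u ≠ 0) (a : ℝ) :
    ∃ θ ∈ Ico a (a + π), ∃ c : ℝ, c ≠ 0 ∧ u = c • ee θ := by
  obtain ⟨r, θ₀, hr, hrθ⟩ := polar hu
  set k : ℤ := ⌈(a - θ₀)/π⌉ with hk
  have hπ := Real.pi_pos
  have h1 : (a - θ₀)/π ≤ k := Int.le_ceil _
  have h2 : (k:ℝ) < (a - θ₀)/π + 1 := Int.ceil_lt_add_one _
  refine ⟨θ₀ + k * π, ⟨?_, ?_⟩, r * (-1:ℝ)^k, ?_, ?_⟩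
  · have h1' : a - θ₀ ≤ k * π := by rwa [div_le_iff₀ hπ] at h1
    linarith
  · have h2' : ((k:ℝ) - 1) * π < a - θ₀ := by
      rw [← lt_div_iff₀ hπ]; linarith
    linarith
  · positivity
  · rw [ee_int_pi, smul_smul, hrθ]
    rw [mul_assoc]
    have : ((-1:ℝ)^k) * ((-1:ℝ)^k) = 1 := by
      rw [← zpow_add₀ (by norm_num : (-1:ℝ) ≠ 0)]
      exact Even.neg_one_zpow ⟨k, rfl⟩
    rw [this, mul_one]

noncomputable def pp (K : Set Plane) (θ : ℝ) : Plane := (gauge K (ee θ))⁻¹ • ee θ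

theorem gauge_ee_pos (hK : IsSymmConvexBody K) (θ : ℝ) : 0 < gauge K (ee θ) :=
  gauge_pos' hK (ee_ne θ)

theorem pp_cont (hK : IsSymmConvexBody K) : Continuous (pp K) := by
  apply Continuous.fun_smul
  · exact ((gauge_cont hK).comp ee_cont).inv₀ (fun θ => (gauge_ee_pos hK θ).ne')
  · exact ee_cont

theorem gauge_pp (hK : IsSymmConvexBody K) (θ : ℝ) : gauge K (pp K θ) = 1 := by
  unfold pp
  rw [gauge_smul' hK, abs_of_pos (inv_pos.2 (gauge_ee_pos hK θ))]
  exact inv_mul_cancel₀ (gauge_ee_pos hK θ).ne'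

theorem pp_frontier (hK : IsSymmConvexBody K) (θ : ℝ) : pp K θ ∈ frontier K :=
  (gauge_frontier hK).1 (gauge_pp hK θ)

theorem pp_ne (hK : IsSymmConvexBody K) (θ : ℝ) : pp K θ ≠ 0 :=
  frontier_ne_zero hK (pp_frontier hK θ)

theorem pp_eq_smul_ee (hK : IsSymmConvexBody K) (θ : ℝ) :
    ∃ R : ℝ, 0 < R ∧ pp K θ = R • ee θ :=
  ⟨(gauge K (ee θ))⁻¹, inv_pos.2 (gauge_ee_pos hK θ), rfl⟩

theorem pp_pi (hK : IsSymmConvexBody K) (θ : ℝ) : pp K (θ + π) = -pp K θ := by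
  unfold pp
  rw [ee_pi, gauge_sym hK, smul_neg]

theorem pp_sub_pi (hK : IsSymmConvexBody K) (θ : ℝ) : pp K (θ - π) = -pp K θ := by
  have := pp_pi hK (θ - π)
  rw [sub_add_cancel] at this
  rw [← neg_neg (pp K (θ-π)), this]

theorem pp_two_pi (hK : IsSymmConvexBody K) (θ : ℝ) : pp K (θ + 2*π) = pp K θ := by
  have : θ + 2*π = (θ + π) + π := by ring
  rw [this, pp_pi hK, pp_pi hK, neg_neg]

theorem ee_int_two_pi (θ : ℝ) (n : ℤ) : ee (θ + n * (2*π)) = ee θ := by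
  unfold ee
  rw [Real.cos_add_int_mul_two_pi, Real.sin_add_int_mul_two_pi]

theorem pp_int_two_pi (hK : IsSymmConvexBody K) (θ : ℝ) (n : ℤ) : pp K (θ + n * (2*π)) = pp K θ := by
  unfold pp
  rw [ee_int_two_pi]

theorem pp_inj (hK : IsSymmConvexBody K) {s t : ℝ} (h : pp K s = pp K t) :
    ∃ n : ℤ, s = t + n * (2*π) := by
  obtain ⟨R, hR, hRe⟩ := pp_eq_smul_ee hK s
  obtain ⟨S, hS, hSe⟩ := pp_eq_smul_ee hK t
  rw [hRe, hSe] at h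
  have h1 : R * Real.cos s = S * Real.cos t := congrArg Prod.fst h
  have h2 : R * Real.sin s = S * Real.sin t := congrArg Prod.snd h
  have e1 : (R*Real.cos s)^2 + (R*Real.sin s)^2 = (S*Real.cos t)^2 + (S*Real.sin t)^2 := by
    rw [h1, h2]
  have hRS : R^2 = S^2 := by
    nlinarith [Real.sin_sq_add_cos_sq s, Real.sin_sq_add_cos_sq t]
  have hRS' : R = S := by nlinarith
  apply ee_inj
  subst hRS'
  have : ee s = ee t := by
    apply smul_right_injective Plane hR.ne' ?_
    · exact h
  exact this

/-- x on frontier is pp of some angle -/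
theorem pp_surj (hK : IsSymmConvexBody K) {x : Plane} (hx : x ∈ frontier K) :
    ∃ θ, pp K θ = x := by
  obtain ⟨r, θ, hr, hre⟩ := polar (frontier_ne_zero hK hx)
  refine ⟨θ, ?_⟩
  have hg : gauge K x = 1 := (gauge_frontier hK).2 hx
  have : gauge K (ee θ) = r⁻¹ := by
    have : gauge K x = r * gauge K (ee θ) := by
      rw [hre, gauge_smul' hK, abs_of_pos hr]
    rw [hg] at this
    field_simp
    linarith [this.symm]
  unfold pp
  rw [this, inv_inv, hre]


def dot (u v : Plane) : ℝ := u.1 * v.1 + u.2 * v.2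

def rot (u : Plane) : Plane := (-u.2, u.1)

theorem dot_cont (n : Plane) : Continuous (dot n) := by unfold dot; fun_prop

theorem dot_add (n u v : Plane) : dot n (u + v) = dot n u + dot n v := by
  unfold dot; simp [Prod.fst_add, Prod.snd_add]; ring

theorem dot_smul (n : Plane) (c : ℝ) (u : Plane) : dot n (c • u) = c * dot n u := by
  unfold dot; simp [Prod.smul_def, smul_eq_mul]; ring

theorem dot_self_pos {n : Plane} (hn : n ≠ 0) : 0 < dot n n := by
  unfold dot
  rcases Prod.mk.injEq n.1 n.2 0 0 ▸ (fun h => hn h) with h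
  by_contra hle
  push_neg at hle
  have h1 : n.1 = 0 := by nlinarith [sq_nonneg n.1, sq_nonneg n.2]
  have h2 : n.2 = 0 := by nlinarith [sq_nonneg n.1, sq_nonneg n.2]
  exact hn (Prod.ext h1 h2)

theorem dot_rot (u : Plane) : dot (rot u) u = 0 := by unfold dot rot; ring

theorem rot_ne {u : Plane} (hu : u ≠ 0) : rot u ≠ 0 := by
  intro h
  apply hu
  have h1 : -u.2 = 0 := congrArg Prod.fst h
  have h2 : u.1 = 0 := congrArg Prod.snd h
  exact Prod.ext h2 (neg_eq_zero.mp h1)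

theorem rot_smul (c : ℝ) (u : Plane) : rot (c • u) = c • rot u := by
  unfold rot
  apply Prod.ext <;> simp [Prod.smul_def, smul_eq_mul] <;> ring

/-- if dot n u = 0, u ≠ 0, then n is a multiple of rot u -/
theorem perp_decomp {n u : Plane} (hu : u ≠ 0) (h : dot n u = 0) : ∃ c : ℝ, n = c • rot u := by
  have hd : 0 < dot u u := dot_self_pos hu
  refine ⟨(n.1 * (-u.2) + n.2 * u.1) / (dot u u), ?_⟩
  unfold dot at *
  unfold rot
  have hq : u.1 * u.1 + u.2 * u.2 ≠ 0 := hd.ne'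
  apply Prod.ext <;> simp only [Prod.smul_def, smul_eq_mul] <;> rw [div_mul_eq_mul_div, eq_div_iff hq]
  · linear_combination u.1 * h
  · linear_combination u.2 * h

def IsSupp (K : Set Plane) (n x : Plane) : Prop :=
  n ≠ 0 ∧ ∀ z ∈ K, dot n z ≤ dot n x

theorem supp_strict (hK : IsSymmConvexBody K) {n x z : Plane} (hs : IsSupp K n x)
    (hz : z ∈ interior K) : dot n z < dot n x := by
  obtain ⟨ε, hε, hball⟩ := Metric.isOpen_iff.1 isOpen_interior z hz
  set δ : ℝ := ε / (2 * (‖n‖ + 1)) with hδ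
  have hnpos : (0:ℝ) < ‖n‖ + 1 := by positivity
  have hδpos : 0 < δ := by positivity
  have hmem : z + δ • n ∈ K := by
    apply interior_subset
    apply hball
    rw [Metric.mem_ball, dist_eq_norm]
    have : z + δ • n - z = δ • n := by abel
    rw [this, norm_smul, Real.norm_eq_abs, abs_of_pos hδpos]
    calc δ * ‖n‖ ≤ δ * (‖n‖ + 1) := by nlinarith
    _ = ε / 2 := by rw [hδ]; field_simp
    _ < ε := by linarith
  have := hs.2 _ hmem
  rw [dot_add, dot_smul] at this
  nlinarith [dot_self_pos hs.1]

theorem supp_pos (hK : IsSymmConvexBody K) {n x : Plane} (hs : IsSupp K n x) : 0 < dot n x := by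
  have := supp_strict hK hs (zero_interior hK)
  simpa [dot] using this

/-- supporting normal gives Birkhoff orthogonality -/
theorem supp_to_borth (hK : IsSymmConvexBody K) {n x y : Plane} (hx : x ∈ frontier K)
    (hs : IsSupp K n x) (hy : dot n y = 0) : BOrth K x y := by
  intro t
  rw [(gauge_frontier hK).2 hx]
  by_contra hlt
  push_neg at hlt
  have hint : x + t • y ∈ interior K := (gauge_interior hK).1 hlt
  have := supp_strict hK hs hint
  rw [dot_add, dot_smul, hy] at this
  simp at this


theorem dot_rot' (u : Plane) : dot u (rot u) = 0 := by unfold dot rot; ring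

theorem clm_eq_dot (f : Plane →L[ℝ] ℝ) (z : Plane) : f z = dot (f (1,0), f (0,1)) z := by
  have hz : z = z.1 • ((1:ℝ),(0:ℝ)) + z.2 • ((0:ℝ),(1:ℝ)) := by
    apply Prod.ext <;> simp
  rw [dot]
  conv_lhs => rw [hz]
  rw [map_add, f.map_smul, f.map_smul]
  simp [smul_eq_mul]
  ring

/-- from Birkhoff orthogonality to supporting normal -/
theorem borth_to_supp (hK : IsSymmConvexBody K) {x y : Plane} (hx : x ∈ frontier K)
    (hb : BOrth K x y) : ∃ n : Plane, IsSupp K n x ∧ dot n y = 0 := by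
  have hline : Disjoint (interior K) (range (fun t : ℝ => x + t • y)) := by
    rw [Set.disjoint_right]
    rintro z ⟨t, rfl⟩ hz
    have h1 := (gauge_interior hK).2 (by simpa using hz)
    have h2 := hb t
    rw [(gauge_frontier hK).2 hx] at h2
    linarith
  have hcvx : Convex ℝ (range (fun t : ℝ => x + t • y)) := by
    rintro a ⟨s, rfl⟩ b ⟨t, rfl⟩ u v hu hv huv
    refine ⟨u*s + v*t, ?_⟩
    show x + (u*s + v*t) • y = u • (x + s • y) + v • (x + t • y)
    have h1 : u • (x + s • y) + v • (x + t • y) = (u+v) • x + (u*s+v*t) • y := by module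
    rw [h1, huv, one_smul]
  obtain ⟨f, s, hfs, hsf⟩ :=
    geometric_hahn_banach_open (Convex.interior hK.1) isOpen_interior hcvx hline
  set n : Plane := (f (1,0), f (0,1)) with hn
  have hfd : ∀ z, f z = dot n z := fun z => clm_eq_dot f z
  have hspos : 0 < s := by
    have := hfs 0 (zero_interior hK)
    rw [hfd] at this
    simpa [dot] using this
  have hfy : f y = 0 := by
    by_contra hy0
    have h1 := hsf (x + ((s - f x - 1)/f y) • y) ⟨_, rfl⟩
    rw [map_add, f.map_smul, smul_eq_mul] at h1
    field_simp at h1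
    linarith
  have hn0 : n ≠ 0 := by
    intro h0
    have : s ≤ f x := hsf x ⟨0, by simp⟩
    rw [hfd, h0] at this
    simp [dot] at this
    linarith
  refine ⟨n, ⟨hn0, ?_⟩, by rw [← hfd]; exact hfy⟩
  intro z hz
  rw [← hfd, ← hfd]
  have hfx : s ≤ f x := hsf x ⟨0, by simp⟩
  -- show f z ≤ s for z ∈ K
  have hzs : f z ≤ s := by
    by_contra hgt
    push_neg at hgt
    have hfz : 0 < f z := lt_trans hspos hgt
    set τ : ℝ := (s + f z)/(2 * f z) with hτ
    have hτ1 : τ < 1 := by rw [hτ]; rw [div_lt_one (by linarith)]; linarith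
    have hτ0 : 0 < τ := by rw [hτ]; positivity
    have hτz : τ • z ∈ interior K := by
      have := (Convex.interior hK.1)
      have h0 : (0:Plane) ∈ interior K := zero_interior hK
      have hcomb : (1-τ) • (0:Plane) + τ • z ∈ interior K :=
        hK.1.combo_interior_closure_mem_interior h0 (subset_closure hz)
          (by linarith) (by linarith) (by ring)
      simpa using hcomb
    have hlt := hfs _ hτz
    rw [f.map_smul, smul_eq_mul, hτ, div_mul_eq_mul_div, div_lt_iff₀ (by linarith : (0:ℝ) < 2 * f z)] at hlt
    nlinarith
  linarith

theorem borth_smul_right (hK : IsSymmConvexBody K) {x y : Plane} {c : ℝ} (hc : c ≠ 0)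
    (hb : BOrth K x y) : BOrth K x (c • y) := by
  intro t
  rw [smul_smul]
  exact hb (t * c)

theorem borth_smul_left (hK : IsSymmConvexBody K) {x y : Plane} {c : ℝ} (hc : c ≠ 0)
    (hb : BOrth K x y) : BOrth K (c • x) y := by
  intro t
  have h1 : c • x + t • y = c • (x + (t/c) • y) := by
    rw [smul_add, smul_smul]
    congr 2
    field_simp
  rw [h1, gauge_smul' hK, gauge_smul' hK]
  exact mul_le_mul_of_nonneg_left (hb (t/c)) (abs_nonneg c)

theorem borth_neg_right (hK : IsSymmConvexBody K) {x y : Plane}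
    (hb : BOrth K x y) : BOrth K x (-y) := by
  have := borth_smul_right hK (c := -1) (by norm_num) hb
  simpa using this

theorem borth_neg_left (hK : IsSymmConvexBody K) {x y : Plane}
    (hb : BOrth K x y) : BOrth K (-x) y := by
  have := borth_smul_left hK (c := -1) (by norm_num) hb
  simpa using this


/-- the angular orthogonality relation -/
def Orth (K : Set Plane) (a b : ℝ) : Prop := BOrth K (pp K a) (pp K b)

theorem orth_shift_up (hK : IsSymmConvexBody K) {a b : ℝ} (h : Orth K a b) :
    Orth K (a + π) (b + π) := by
  unfold Orth at *
  rw [pp_pi hK, pp_pi hK]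
  exact borth_neg_left hK (borth_neg_right hK h)

theorem orth_shift_down (hK : IsSymmConvexBody K) {a b : ℝ} (h : Orth K a b) :
    Orth K (a - π) (b - π) := by
  unfold Orth at *
  rw [pp_sub_pi hK, pp_sub_pi hK]
  exact borth_neg_left hK (borth_neg_right hK h)

/-- BOrth to a nonzero multiple of pp -/
theorem borth_pp_of_dir (hK : IsSymmConvexBody K) {x : Plane} {c : ℝ} {θ : ℝ}
    (hc : c ≠ 0) (hb : BOrth K x (c • ee θ)) : BOrth K x (pp K θ) := by
  obtain ⟨R, hR, hRe⟩ := pp_eq_smul_ee hK θ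
  rw [hRe]
  have h1 : BOrth K x (ee θ) := by
    have := borth_smul_right hK (c := c⁻¹) (inv_ne_zero hc) hb
    rwa [smul_smul, inv_mul_cancel₀ hc, one_smul] at this
  exact borth_smul_right hK hR.ne' h1

/-- existence of a forward orthogonal direction -/
theorem orth_exists_fwd (hK : IsSymmConvexBody K) (θ : ℝ) :
    ∃ β ∈ Ioo θ (θ + π), Orth K θ β := by
  set x := pp K θ with hx
  have hxf : x ∈ frontier K := pp_frontier hK θ
  have hxint : x ∉ interior K := by
    rw [hK.2.1.isClosed.frontier_eq] at hxf; exact hxf.2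
  obtain ⟨f, hf⟩ := geometric_hahn_banach_open_point (Convex.interior hK.1) isOpen_interior hxint
  set n : Plane := (f (1,0), f (0,1)) with hn
  have hfd : ∀ z, f z = dot n z := by
    intro z
    have hz : z = z.1 • ((1:ℝ),(0:ℝ)) + z.2 • ((0:ℝ),(1:ℝ)) := by apply Prod.ext <;> simp
    rw [dot]
    conv_lhs => rw [hz]
    rw [map_add, f.map_smul, f.map_smul]
    simp [smul_eq_mul]; ring
  have hfx : 0 < f x := by
    have := hf 0 (zero_interior hK)
    simpa using this
  have hn0 : n ≠ 0 := by
    intro h0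
    rw [hfd, h0] at hfx
    simp [dot] at hfx
  have hsupp : IsSupp K n x := by
    refine ⟨hn0, ?_⟩
    intro z hz
    rw [← hfd, ← hfd]
    by_contra hgt
    push_neg at hgt
    have hfz : 0 < f z := lt_trans hfx hgt
    set τ : ℝ := (f x + f z)/(2 * f z) with hτ
    have hτ1 : τ < 1 := by rw [hτ, div_lt_one (by linarith)]; linarith
    have hτ0 : 0 < τ := by rw [hτ]; positivity
    have hτz : τ • z ∈ interior K := by
      have hcomb : (1-τ) • (0:Plane) + τ • z ∈ interior K :=
        hK.1.combo_interior_closure_mem_interior (zero_interior hK) (subset_closure hz)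
          (by linarith) (by linarith) (by ring)
      simpa using hcomb
    have hlt := hf _ hτz
    rw [f.map_smul, smul_eq_mul, hτ, div_mul_eq_mul_div,
      div_lt_iff₀ (by linarith : (0:ℝ) < 2 * f z)] at hlt
    nlinarith
  -- direction of rot n
  obtain ⟨β, hβmem, c, hc, hcu⟩ := dir_exists (rot_ne hn0) θ
  have hborth : BOrth K x (pp K β) := by
    apply borth_pp_of_dir hK hc
    rw [← hcu]
    exact supp_to_borth hK hxf hsupp (dot_rot' n)
  -- β ≠ θ
  rcases hβmem with ⟨hβ1, hβ2⟩
  have hβne : β ≠ θ := by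
    intro h
    subst h
    -- then rot n = c • ee β, and x is a positive multiple of ee β, so dot n x = 0, contra hfx
    obtain ⟨R, hR, hRe⟩ := pp_eq_smul_ee hK β
    have hd : dot n x = 0 := by
      rw [← hx] at hRe
      rw [hRe]
      rw [dot_smul]
      have hrc : dot n (ee β) = 0 := by
        have h0 := dot_rot' n
        rw [hcu, dot_smul] at h0
        rcases mul_eq_zero.1 h0 with h | h
        · exact absurd h hc
        · exact h
      rw [hrc, mul_zero]
    rw [hfd] at hfx
    rw [hd] at hfx
    exact lt_irrefl _ hfx
  exact ⟨β, ⟨lt_of_le_of_ne hβ1 (Ne.symm hβne), hβ2⟩, hborth⟩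

/-- existence of a backward co-orthogonal point -/
theorem orth_exists_bwd (hK : IsSymmConvexBody K) (θ : ℝ) :
    ∃ α ∈ Ioo (θ - π) θ, Orth K α θ := by
  set x := pp K θ with hx
  set n : Plane := rot (ee θ) with hn
  have hn0 : n ≠ 0 := rot_ne (ee_ne θ)
  -- maximize dot n over K
  have hKne : K.Nonempty := ⟨0, interior_subset (zero_interior hK)⟩
  obtain ⟨z₀, hz₀K, hmax⟩ := hK.2.1.exists_isMaxOn hKne (dot_cont n).continuousOn
  have hsupp : IsSupp K n z₀ := ⟨hn0, fun z hz => hmax hz⟩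
  have hpos : 0 < dot n z₀ := supp_pos hK hsupp
  have hz₀f : z₀ ∈ frontier K := by
    rw [hK.2.1.isClosed.frontier_eq]
    refine ⟨hz₀K, fun hint => ?_⟩
    exact lt_irrefl _ (supp_strict hK hsupp hint)
  have hz₀0 : z₀ ≠ 0 := frontier_ne_zero hK hz₀f
  -- z₀ ⊣ x
  have hborth : BOrth K z₀ x := by
    have h1 : BOrth K z₀ (ee θ) := supp_to_borth hK hz₀f hsupp (by rw [hn]; exact dot_rot (ee θ))
    obtain ⟨R, hR, hRe⟩ := pp_eq_smul_ee hK θ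
    rw [hx, hRe]
    exact borth_smul_right hK hR.ne' h1
  -- z₀ not parallel to ee θ
  have hnp : ∀ c : ℝ, z₀ ≠ c • ee θ := by
    intro c hcz
    have : dot n z₀ = 0 := by
      rw [hcz, dot_smul, hn]
      rw [dot_rot (ee θ), mul_zero]
    linarith
  obtain ⟨α, ⟨hα1, hα2⟩, c, hc, hcu⟩ := dir_exists hz₀0 (θ - π)
  have hαne : α ≠ θ - π := by
    intro h
    subst h
    -- ee (θ - π) = -ee θ
    apply hnp (-c)
    rw [hcu]
    have : ee (θ - π) = -ee θ := by
      have hp : ee ((θ - π) + π) = -ee (θ-π) := by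
        unfold ee
        rw [Real.cos_add_pi, Real.sin_add_pi]; rfl
      rw [sub_add_cancel] at hp
      rw [← neg_neg (ee (θ-π)), hp]
    rw [this]
    module
  -- Orth α θ
  have horth : Orth K α θ := by
    unfold Orth
    obtain ⟨R, hR, hRe⟩ := pp_eq_smul_ee hK α
    rw [hRe]
    have h1 : BOrth K (ee α) x := by
      have h2 : BOrth K (c⁻¹ • z₀) x := borth_smul_left hK (inv_ne_zero hc) hborth
      rw [hcu, smul_smul, inv_mul_cancel₀ hc, one_smul] at h2
      exact h2
    exact borth_smul_left hK hR.ne' h1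
  refine ⟨α, ⟨lt_of_le_of_ne hα1 (Ne.symm hαne), by linarith⟩, horth⟩


theorem dot_smul_left (c : ℝ) (u v : Plane) : dot (c • u) v = c * dot u v := by
  unfold dot; simp [Prod.smul_def, smul_eq_mul]; ring

theorem dot_rot_ee (b t : ℝ) : dot (rot (ee b)) (ee t) = Real.sin (t - b) := by
  unfold dot rot ee
  simp only []
  rw [Real.sin_sub]
  ring

noncomputable def Rr (K : Set Plane) (t : ℝ) : ℝ := (gauge K (ee t))⁻¹

theorem Rr_pos (hK : IsSymmConvexBody K) (t : ℝ) : 0 < Rr K t :=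
  inv_pos.2 (gauge_ee_pos hK t)

theorem pp_eq_Rr (t : ℝ) : pp K t = Rr K t • ee t := rfl

/-- key supporting-line inequality along an orthogonal chord -/
theorem chord_ineq (hK : IsSymmConvexBody K) {a b : ℝ} (hab : a < b) (hab2 : b < a + π)
    (ho : Orth K a b) (t : ℝ) :
    Rr K t * Real.sin (b - t) ≤ Rr K a * Real.sin (b - a) := by
  obtain ⟨n, hsupp, hperp⟩ := borth_to_supp hK (pp_frontier hK a) ho
  have hperp' : dot n (ee b) = 0 := by
    rw [pp_eq_Rr, dot_smul] at hperp
    rcases mul_eq_zero.1 hperp with h | h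
    · exact absurd h (Rr_pos hK b).ne'
    · exact h
  obtain ⟨c, hc⟩ := perp_decomp (ee_ne b) hperp'
  have hval : ∀ u : ℝ, dot n (pp K u) = -(c * Rr K u * Real.sin (b - u)) := by
    intro u
    rw [pp_eq_Rr, hc, dot_smul, dot_smul_left, dot_rot_ee]
    have : Real.sin (u - b) = -Real.sin (b - u) := by
      rw [← Real.sin_neg]; congr 1; ring
    rw [this]; ring
  have hcneg : c < 0 := by
    have hpos := supp_pos hK hsupp
    rw [hval a] at hpos
    have hsin : 0 < Real.sin (b - a) :=
      Real.sin_pos_of_pos_of_lt_pi (by linarith) (by linarith)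
    by_contra hge
    push_neg at hge
    have hca : 0 ≤ c * Rr K a := mul_nonneg hge (Rr_pos hK a).le
    have : 0 ≤ c * Rr K a * Real.sin (b - a) := mul_nonneg hca hsin.le
    linarith
  have hineq := hsupp.2 _ (frontier_sub hK (pp_frontier hK t))
  rw [hval t, hval a] at hineq
  -- hineq : -(c * Rr t * sin (b-t)) ≤ -(c * Rr a * sin (b-a))
  by_contra hgt
  push_neg at hgt
  have := mul_lt_mul_of_neg_left hgt hcneg
  -- c * (Rr t * sin (b-t)) < c * (Rr a * sin (b-a))
  nlinarith

/-- The crossing lemma: two orthogonality chords cannot strictly cross. -/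
theorem no_cross (hK : IsSymmConvexBody K) {θ θ' β' β : ℝ}
    (h1 : θ < θ') (h2 : θ' < β') (h3 : β' < β) (h4 : β < θ + π)
    (ho1 : Orth K θ β) (ho2 : Orth K θ' β') : False := by
  have i1 := chord_ineq hK (by linarith) h4 ho1 θ'
  have i2 := chord_ineq hK h2 (by linarith) ho2 θ
  set A := Rr K θ with hA
  set B := Rr K θ' with hB
  have hApos := Rr_pos hK θ
  have hBpos := Rr_pos hK θ'
  rw [← hA] at hApos; rw [← hB] at hBpos
  set s1 := Real.sin (β - θ') with hs1
  set s2 := Real.sin (β' - θ) with hs2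
  set s3 := Real.sin (β - θ) with hs3
  set s4 := Real.sin (β' - θ') with hs4
  -- i1 : B * s1 ≤ A * s3,  i2 : A * s2 ≤ B * s4
  have hs1p : 0 < s1 := Real.sin_pos_of_pos_of_lt_pi (by linarith) (by linarith)
  have hs2p : 0 < s2 := Real.sin_pos_of_pos_of_lt_pi (by linarith) (by linarith)
  have hs3p : 0 < s3 := Real.sin_pos_of_pos_of_lt_pi (by linarith) (by linarith)
  have hs4p : 0 < s4 := Real.sin_pos_of_pos_of_lt_pi (by linarith) (by linarith)
  have hkey : s1 * s2 = s3 * s4 + Real.sin (β - β') * Real.sin (θ' - θ) := by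
    rw [hs1, hs2, hs3, hs4]
    rw [Real.sin_sub, Real.sin_sub, Real.sin_sub, Real.sin_sub, Real.sin_sub, Real.sin_sub]
    ring
  have hPp : 0 < Real.sin (β - β') * Real.sin (θ' - θ) := by
    apply mul_pos
    · exact Real.sin_pos_of_pos_of_lt_pi (by linarith) (by linarith)
    · exact Real.sin_pos_of_pos_of_lt_pi (by linarith) (by linarith)
  -- multiply the two inequalities
  have hm : (B * s1) * (A * s2) ≤ (A * s3) * (B * s4) := by
    apply mul_le_mul i1 i2 (by positivity) ?_
    nlinarith
  nlinarith


theorem pp_inj_strict (hK : IsSymmConvexBody K) {s t : ℝ} (h : pp K s = pp K t)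
    (hlt : |s - t| < 2*π) : s = t := by
  obtain ⟨n, hn⟩ := pp_inj hK h
  have hπ := Real.pi_pos
  have hn0 : n = 0 := by
    by_contra h0
    have h1 : (1:ℝ) ≤ |(n:ℝ)| := by
      have : (1:ℤ) ≤ |n| := Int.one_le_abs h0
      exact_mod_cast this
    rw [abs_lt] at hlt
    rcases abs_cases (n:ℝ) with ⟨he, _⟩ | ⟨he, _⟩ <;> nlinarith
  subst hn0
  simpa using hn

noncomputable def Arc (K : Set Plane) (a b : ℝ) : Set Plane := pp K '' Icc a b

theorem arc_subset_frontier (hK : IsSymmConvexBody K) (a b : ℝ) :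
    Arc K a b ⊆ frontier K := by
  rintro z ⟨t, _, rfl⟩
  exact pp_frontier hK t

theorem arc_compact (hK : IsSymmConvexBody K) (a b : ℝ) : IsCompact (Arc K a b) :=
  isCompact_Icc.image (pp_cont hK)

theorem arc_measurable (hK : IsSymmConvexBody K) (a b : ℝ) : MeasurableSet (Arc K a b) :=
  (arc_compact hK a b).isClosed.measurableSet

theorem arc_union (hK : IsSymmConvexBody K) {a c b : ℝ} (h1 : a ≤ c) (h2 : c ≤ b) :
    Arc K a c ∪ Arc K c b = Arc K a b := by
  unfold Arc
  rw [← image_union]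
  congr 1
  rw [Icc_union_Icc_eq_Icc h1 h2]

theorem arc_inter_small (hK : IsSymmConvexBody K) {a c b : ℝ} (h1 : a ≤ c) (h2 : c ≤ b)
    (hlen : b - a < 2*π) : Arc K a c ∩ Arc K c b ⊆ {pp K c} := by
  rintro z ⟨⟨s, hs, rfl⟩, ⟨t, ht, hts⟩⟩
  have hst : s = t := by
    apply pp_inj_strict hK hts.symm
    rw [abs_lt]
    constructor <;> [nlinarith [hs.1, hs.2, ht.1, ht.2]; nlinarith [hs.1, hs.2, ht.1, ht.2]]
  have : s = c := le_antisymm hs.2 (hst ▸ ht.1)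
  rw [this]; rfl

theorem measure_split (hμ : IsBMeasure K μ) {A B : Set Plane} (hA : MeasurableSet A)
    (hAB : μ (A ∩ B) = 0) : μ (A ∪ B) = μ A + μ B := by
  have h := measure_union_add_inter (μ := μ) B hA
  rw [Set.union_comm B A, Set.inter_comm B A, hAB, add_zero] at h
  rw [h]
  exact add_comm _ _

theorem measure_arc_split (hK : IsSymmConvexBody K) (hμ : IsBMeasure K μ) {a c b : ℝ}
    (h1 : a ≤ c) (h2 : c ≤ b) (hlen : b - a < 2*π) :
    μ (Arc K a b) = μ (Arc K a c) + μ (Arc K c b) := by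
  rw [← arc_union hK h1 h2]
  apply measure_split hμ (arc_measurable hK a c)
  exact measure_mono_null (arc_inter_small hK h1 h2 hlen) (hμ.1.2.2.2 _)

theorem isBArc_arc (hK : IsSymmConvexBody K) {a b : ℝ} (h1 : a ≤ b) (h2 : b - a < π) :
    IsBArc K (Arc K a b) (pp K a) (pp K b) := by
  have hπ := Real.pi_pos
  refine ⟨arc_subset_frontier hK a b, (arc_compact hK a b).isClosed,
    (isPreconnected_Icc).image _ (pp_cont hK).continuousOn,
    ⟨a, ⟨le_refl a, h1⟩, rfl⟩, ⟨b, ⟨h1, le_refl b⟩, rfl⟩, ?_, ?_⟩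
  · -- antipode free
    rintro z ⟨s, hs, rfl⟩ ⟨t, ht, htz⟩
    -- pp t = - pp s = pp (s + π)
    have h3 : pp K t = pp K (s + π) := by rw [pp_pi hK]; rw [htz]
    obtain ⟨n, hn⟩ := pp_inj hK h3
    have hb1 : t - s - π = n * (2*π) := by linarith
    have hb2 : |t - s| ≤ b - a := by
      rw [abs_le]; constructor <;> nlinarith [hs.1, hs.2, ht.1, ht.2]
    rw [abs_le] at hb2
    rcases lt_trichotomy n 0 with hneg | hzero | hpos
    · have h5 : n ≤ -1 := by omega
      have : (n:ℝ) ≤ -1 := by exact_mod_cast h5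
      nlinarith
    · subst hzero; simp at hb1; nlinarith
    · have : (1:ℝ) ≤ (n:ℝ) := by exact_mod_cast hpos
      nlinarith
  · -- minimality
    intro C' hsub hclosed hconn hxa hxb
    apply Subset.antisymm hsub
    rintro z ⟨t, ht, rfl⟩
    by_contra hzC
    have hta : t ≠ a := fun h => hzC (h ▸ hxa)
    have htb : t ≠ b := fun h => hzC (h ▸ hxb)
    have hta' : a < t := lt_of_le_of_ne ht.1 (Ne.symm hta)
    have htb' : t < b := lt_of_le_of_ne ht.2 htb
    set U := pp K '' Icc a t with hU
    set V := pp K '' Icc t b with hV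
    have hUc : IsCompact U := isCompact_Icc.image (pp_cont hK)
    have hVc : IsCompact V := isCompact_Icc.image (pp_cont hK)
    have hcover : C' ⊆ Vᶜ ∪ Uᶜ := by
      intro z hz
      by_contra hz2
      simp only [mem_union, mem_compl_iff, not_or, not_not] at hz2
      -- z ∈ V and z ∈ U
      have : z ∈ ({pp K t} : Set Plane) := by
        have h3 : Arc K a t ∩ Arc K t b ⊆ {pp K t} :=
          arc_inter_small hK ht.1 ht.2 (by linarith)
        exact h3 ⟨hz2.2, hz2.1⟩
      rw [mem_singleton_iff] at this
      exact hzC (this ▸ hz)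
    have hUne : (C' ∩ Vᶜ).Nonempty := by
      refine ⟨pp K a, hxa, ?_⟩
      rw [mem_compl_iff]
      rintro ⟨s, hsmem, hsval⟩
      have : s = a := by
        apply pp_inj_strict hK hsval
        rw [abs_lt]
        constructor <;> nlinarith [hsmem.1, hsmem.2]
      subst this
      linarith [hsmem.1]
    have hVne : (C' ∩ Uᶜ).Nonempty := by
      refine ⟨pp K b, hxb, ?_⟩
      rw [mem_compl_iff]
      rintro ⟨s, hsmem, hsval⟩
      have : s = b := by
        apply pp_inj_strict hK hsval
        rw [abs_lt]
        constructor <;> nlinarith [hsmem.1, hsmem.2]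
      subst this
      linarith [hsmem.2]
    obtain ⟨w, hwC, hwu, hwv⟩ :=
      hconn Vᶜ Uᶜ hVc.isClosed.isOpen_compl hUc.isClosed.isOpen_compl hcover hUne hVne
    have hwarc : w ∈ Arc K a b := hsub hwC
    rw [← arc_union hK ht.1 ht.2] at hwarc
    rcases hwarc with h | h
    · exact hwv h
    · exact hwu h

theorem quarter (hK : IsSymmConvexBody K) (hμ : IsBMeasure K μ) {a b : ℝ}
    (h1 : a ≤ b) (h2 : b - a < π) (ho : Orth K a b) :
    μ (Arc K a b) = ENNReal.ofReal (π/2) :=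
  hμ.2 _ _ _ (isBArc_arc hK h1 h2) ho

theorem frontier_eq_arc (hK : IsSymmConvexBody K) (a : ℝ) :
    frontier K = Arc K a (a + 2*π) := by
  have hπ := Real.pi_pos
  apply Subset.antisymm
  · intro x hx
    obtain ⟨θ, hθ⟩ := pp_surj hK hx
    set k : ℤ := ⌊(θ - a)/(2*π)⌋ with hk
    have h1 : (k:ℝ) ≤ (θ - a)/(2*π) := Int.floor_le _
    have h2 : (θ - a)/(2*π) < k + 1 := Int.lt_floor_add_one _
    have h1' : (k:ℝ) * (2*π) ≤ θ - a := (le_div_iff₀ (by linarith)).1 h1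
    have h2' : θ - a < ((k:ℝ)+1) * (2*π) := (div_lt_iff₀ (by linarith)).1 h2
    refine ⟨θ - k * (2*π), ⟨by linarith, by nlinarith⟩, ?_⟩
    have heq : θ - (k:ℝ) * (2*π) = θ + ((-k : ℤ):ℝ) * (2*π) := by push_cast; ring
    rw [heq, pp_int_two_pi hK θ (-k), hθ]
  · exact arc_subset_frontier hK _ _

theorem arc_neg (hK : IsSymmConvexBody K) (a b : ℝ) :
    Arc K (a + π) (b + π) = -(Arc K a b) := by
  ext z
  simp only [Set.mem_neg]
  constructor
  · rintro ⟨t, ht, rfl⟩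
    refine ⟨t - π, ⟨by linarith [ht.1], by linarith [ht.2]⟩, ?_⟩
    have : pp K ((t - π) + π) = -pp K (t - π) := pp_pi hK _
    rw [sub_add_cancel] at this
    rw [this, neg_neg]
  · rintro ⟨t, ht, htz⟩
    refine ⟨t + π, ⟨by linarith [ht.1], by linarith [ht.2]⟩, ?_⟩
    rw [pp_pi hK, htz, neg_neg]

theorem measure_ne_top (hK : IsSymmConvexBody K) (hμ : IsBMeasure K μ) (a b : ℝ) :
    μ (Arc K a b) ≠ ⊤ := by
  have h1 : μ (Arc K a b) ≤ μ (frontier K) :=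
    measure_mono (arc_subset_frontier hK a b)
  rw [hμ.1.1] at h1
  exact (lt_of_le_of_lt h1 ENNReal.ofReal_lt_top).ne

theorem half (hK : IsSymmConvexBody K) (hμ : IsBMeasure K μ) (a : ℝ) :
    μ (Arc K a (a + π)) = ENNReal.ofReal π := by
  have hπ := Real.pi_pos
  have hsplit : μ (Arc K a (a + 2*π)) = μ (Arc K a (a+π)) + μ (Arc K (a+π) (a+2*π)) := by
    rw [← arc_union hK (show a ≤ a+π by linarith) (show a+π ≤ a+2*π by linarith)]
    apply measure_split hμ (arc_measurable hK _ _)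
    have hss : Arc K a (a+π) ∩ Arc K (a+π) (a+2*π) ⊆ {pp K (a+π)} ∪ {pp K a} := by
      rintro z ⟨⟨s, hs, rfl⟩, ⟨t, ht, hts⟩⟩
      obtain ⟨n, hn⟩ := pp_inj hK hts
      -- hn : t = s + n * 2π,  t - s ∈ [0, 2π]
      have hb0 : (0:ℝ) ≤ (n:ℝ) * (2*π) := by nlinarith [hs.1, hs.2, ht.1, ht.2]
      have hb1 : (n:ℝ) * (2*π) ≤ 2*π := by nlinarith [hs.1, hs.2, ht.1, ht.2]
      have hn0 : (0:ℝ) ≤ (n:ℝ) := by nlinarith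
      have hn1 : (n:ℝ) ≤ 1 := by nlinarith
      have hn0' : (0:ℤ) ≤ n := by exact_mod_cast hn0
      have hn1' : n ≤ (1:ℤ) := by exact_mod_cast hn1
      interval_cases n
      · -- n = 0 : s = t = a + π
        left
        have hst : t = s := by simpa using hn
        have : s = a + π := le_antisymm hs.2 (hst ▸ ht.1)
        rw [this]; rfl
      · -- n = 1 : s = a
        right
        have hs' : s = a := by
          push_cast at hn
          have h6 := ht.2
          have h7 := hs.1
          linarith
        rw [hs']; rfl
    apply measure_mono_null hss
    exact measure_union_null (hμ.1.2.2.2 _) (hμ.1.2.2.2 _)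
  have hneg : Arc K (a+π) (a+2*π) = -(Arc K a (a+π)) := by
    have : a + 2*π = (a + π) + π := by ring
    rw [this]
    exact arc_neg hK a (a+π)
  have hfront : μ (Arc K a (a + 2*π)) = ENNReal.ofReal (2*π) := by
    rw [← frontier_eq_arc hK a]
    exact hμ.1.1
  rw [hfront, hneg, hμ.1.2.2.1] at hsplit
  -- hsplit : ofReal (2π) = X + X
  have hX := measure_ne_top hK hμ a (a+π)
  have h2 : (μ (Arc K a (a+π))).toReal = π := by
    have h3 := congrArg ENNReal.toReal hsplit
    rw [ENNReal.toReal_add hX hX, ENNReal.toReal_ofReal (by linarith)] at h3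
    linarith
  rw [← ENNReal.ofReal_toReal hX, h2]


theorem ofReal_pi_halves : ENNReal.ofReal (π/2) + ENNReal.ofReal (π/2) = ENNReal.ofReal π := by
  rw [← ENNReal.ofReal_add (by positivity) (by positivity)]
  norm_num

theorem cancel_left {a b : ENNReal} (ha : a ≠ ⊤) (h : a = a + b) : b = 0 :=
  WithTop.add_left_cancel ha (show a + b = a + 0 by rw [add_zero]; exact h.symm)

/-- two consecutive quarters sum to π -/
theorem two_quarters (hK : IsSymmConvexBody K) (hμ : IsBMeasure K μ) {a b c : ℝ}
    (h1 : a < b) (h2 : b < a + π) (h3 : b < c) (h4 : c < b + π) (h5 : c - a < 2*π)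
    (ho1 : Orth K a b) (ho2 : Orth K b c) :
    μ (Arc K a c) = ENNReal.ofReal π := by
  rw [measure_arc_split hK hμ h1.le (by linarith : b ≤ c) h5,
    quarter hK hμ h1.le (by linarith) ho1, quarter hK hμ h3.le (by linarith) ho2,
    ofReal_pi_halves]

def LeftNull (K : Set Plane) (μ : Measure Plane) (θ : ℝ) : Prop :=
  ∃ l, θ - π < l ∧ l < θ ∧ μ (Arc K l θ) = 0

def RightNull (K : Set Plane) (μ : Measure Plane) (θ : ℝ) : Prop :=
  ∃ r, θ < r ∧ r < θ + π ∧ μ (Arc K θ r) = 0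

theorem neg_arc_measure (hK : IsSymmConvexBody K) (hμ : IsBMeasure K μ) (a b : ℝ) :
    μ (Arc K (a + π) (b + π)) = μ (Arc K a b) := by
  rw [arc_neg hK a b, hμ.1.2.2.1]

theorem fwd_lt_leftNull (hK : IsSymmConvexBody K) (hμ : IsBMeasure K μ) {θ β γ : ℝ}
    (h1 : θ < β) (h2 : β < θ + π) (h3 : β < γ) (h4 : γ < β + π) (h5 : γ < θ + π)
    (ho1 : Orth K θ β) (ho2 : Orth K β γ) : LeftNull K μ θ := by
  have hπ := Real.pi_pos
  have hq := two_quarters hK hμ h1 h2 h3 h4 (by linarith) ho1 ho2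
  have hsplit := measure_arc_split hK hμ (show θ ≤ γ by linarith) (show γ ≤ θ + π by linarith)
    (by linarith)
  rw [half hK hμ θ, hq] at hsplit
  have hz : μ (Arc K γ (θ + π)) = 0 := cancel_left (by simp) hsplit
  refine ⟨γ - π, by linarith, by linarith, ?_⟩
  have : μ (Arc K ((γ - π) + π) ((θ) + π)) = μ (Arc K (γ-π) θ) := neg_arc_measure hK hμ _ _
  rw [sub_add_cancel] at this
  rw [← this, hz]

theorem fwd_gt_rightNull (hK : IsSymmConvexBody K) (hμ : IsBMeasure K μ) {θ β γ : ℝ}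
    (h1 : θ < β) (h2 : β < θ + π) (h3 : β < γ) (h4 : γ < β + π) (h5 : θ + π < γ)
    (ho1 : Orth K θ β) (ho2 : Orth K β γ) : RightNull K μ θ := by
  have hπ := Real.pi_pos
  have hq := two_quarters hK hμ h1 h2 h3 h4 (by linarith) ho1 ho2
  have hsplit := measure_arc_split hK hμ (show θ ≤ θ + π by linarith) (show θ + π ≤ γ by linarith)
    (by linarith)
  rw [half hK hμ θ, hq] at hsplit
  have hz : μ (Arc K (θ + π) γ) = 0 := cancel_left (by simp) hsplit
  refine ⟨γ - π, by linarith, by linarith, ?_⟩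
  have : μ (Arc K (θ + π) ((γ - π) + π)) = μ (Arc K θ (γ-π)) := neg_arc_measure hK hμ _ _
  rw [sub_add_cancel] at this
  rw [← this, hz]

theorem bwd_gt_rightNull (hK : IsSymmConvexBody K) (hμ : IsBMeasure K μ) {θ β γ : ℝ}
    (h1 : θ - π < β) (h2 : β < θ) (h3 : β - π < γ) (h4 : γ < β) (h5 : θ - π < γ)
    (ho1 : Orth K β θ) (ho2 : Orth K γ β) : RightNull K μ θ := by
  have hπ := Real.pi_pos
  have hq := two_quarters hK hμ h4 (by linarith) h2 (by linarith) (by linarith) ho2 ho1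
  have hsplit := measure_arc_split hK hμ (show γ ≤ θ by linarith) (show θ ≤ γ + π by linarith)
    (by linarith)
  rw [half hK hμ γ, hq] at hsplit
  have hz : μ (Arc K θ (γ + π)) = 0 := cancel_left (by simp) hsplit
  exact ⟨γ + π, by linarith, by linarith, hz⟩

theorem bwd_lt_leftNull (hK : IsSymmConvexBody K) (hμ : IsBMeasure K μ) {θ β γ : ℝ}
    (h1 : θ - π < β) (h2 : β < θ) (h3 : β - π < γ) (h4 : γ < β) (h5 : γ < θ - π)
    (ho1 : Orth K β θ) (ho2 : Orth K γ β) : LeftNull K μ θ := by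
  have hπ := Real.pi_pos
  have hq := two_quarters hK hμ h4 (by linarith) h2 (by linarith) (by linarith) ho2 ho1
  have hsplit := measure_arc_split hK hμ (show γ ≤ θ - π by linarith) (show θ - π ≤ θ by linarith)
    (by linarith)
  have hhalf : μ (Arc K (θ - π) θ) = ENNReal.ofReal π := by
    have := half hK hμ (θ - π)
    rw [sub_add_cancel] at this
    exact this
  rw [hq, hhalf] at hsplit
  have hz : μ (Arc K γ (θ - π)) = 0 := by
    rw [add_comm] at hsplit
    exact cancel_left (by simp) hsplit
  refine ⟨γ + π, by linarith, by linarith, ?_⟩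
  have : μ (Arc K (γ + π) ((θ - π) + π)) = μ (Arc K γ (θ - π)) := neg_arc_measure hK hμ _ _
  rw [sub_add_cancel] at this
  rw [this, hz]

/-- impossibility: all forward chains short and all backward chains long (case A) -/
theorem contra1 (hK : IsSymmConvexBody K) (θ : ℝ)
    (hA : ∀ β γ, θ < β → β < θ+π → β < γ → γ < β+π → Orth K θ β → Orth K β γ → γ < θ+π)
    (hB : ∀ β γ, θ-π < β → β < θ → β-π < γ → γ < β → Orth K β θ → Orth K γ β → γ < θ-π) :
    False := by
  have hπ := Real.pi_pos
  obtain ⟨B, ⟨hB1, hB2⟩, hoB⟩ := orth_exists_bwd hK θ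
  obtain ⟨B', ⟨hB'1, hB'2⟩, hoB'⟩ := orth_exists_bwd hK B
  have hB'lt : B' < θ - π := hB B B' hB1 hB2 hB'1 hB'2 hoB hoB'
  have hoBB' : Orth K (B' + π) (B + π) := orth_shift_up hK hoB'
  have hoBθ : Orth K (B + π) (θ + π) := orth_shift_up hK hoB
  obtain ⟨β, ⟨hβ1, hβ2⟩, hoβ⟩ := orth_exists_fwd hK θ
  obtain ⟨γ, ⟨hγ1, hγ2⟩, hoγ⟩ := orth_exists_fwd hK β
  have hγlt : γ < θ + π := hA β γ hβ1 hβ2 hγ1 hγ2 hoβ hoγ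
  rcases lt_trichotomy β (B + π) with hc | hc | hc
  · exact no_cross hK (show B' + π < θ by linarith) hβ1 hc (by linarith) hoBB' hoβ
  · have hoβθ : Orth K β (θ + π) := by rw [hc]; exact hoBθ
    have := hA β (θ + π) hβ1 hβ2 (by linarith) (by linarith) hoβ hoβθ
    linarith
  · exact no_cross hK hc hγ1 hγlt (by linarith) hoBθ hoγ

/-- impossibility: all forward chains long and all backward chains short (case B) -/
theorem contra2 (hK : IsSymmConvexBody K) (θ : ℝ)
    (hA : ∀ β γ, θ < β → β < θ+π → β < γ → γ < β+π → Orth K θ β → Orth K β γ → θ+π < γ)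
    (hB : ∀ β γ, θ-π < β → β < θ → β-π < γ → γ < β → Orth K β θ → Orth K γ β → θ-π < γ) :
    False := by
  have hπ := Real.pi_pos
  obtain ⟨β, ⟨hβ1, hβ2⟩, hoβ⟩ := orth_exists_fwd hK θ
  obtain ⟨γ, ⟨hγ1, hγ2⟩, hoγ⟩ := orth_exists_fwd hK β
  have hγgt : θ + π < γ := hA β γ hβ1 hβ2 hγ1 hγ2 hoβ hoγ
  have hoθβ' : Orth K (θ - π) (β - π) := orth_shift_down hK hoβ
  have hoβγ' : Orth K (β - π) (γ - π) := orth_shift_down hK hoγ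
  obtain ⟨α, ⟨hα1, hα2⟩, hoα⟩ := orth_exists_bwd hK θ
  obtain ⟨α', ⟨hα'1, hα'2⟩, hoα'⟩ := orth_exists_bwd hK α
  have hα'gt : θ - π < α' := hB α α' hα1 hα2 hα'1 hα'2 hoα hoα'
  rcases lt_trichotomy α (β - π) with hc | hc | hc
  · exact no_cross hK hα'gt hα'2 hc (by linarith) hoθβ' hoα'
  · have hoβθπ : Orth K β (θ + π) := by
      have := orth_shift_up hK hoα
      rw [hc, sub_add_cancel] at this
      exact this
    have := hA β (θ + π) hβ1 hβ2 (by linarith) (by linarith) hoβ hoβθπ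
    linarith
  · exact no_cross hK hc hα2 (by linarith) (by linarith) hoβγ' hoα

theorem chain_ne_fwd (hK : IsSymmConvexBody K) {θ β γ : ℝ} (hnA : pp K θ ∉ Auerbach K)
    (h1 : θ < β) (h2 : β < θ + π) (ho1 : Orth K θ β) (ho2 : Orth K β γ) : γ ≠ θ + π := by
  intro hγ
  subst hγ
  apply hnA
  refine ⟨pp_frontier hK θ, pp K β, pp_frontier hK β, ho1, ?_⟩
  have h3 := borth_neg_right hK ho2
  rw [pp_pi hK θ, neg_neg] at h3
  exact h3

theorem chain_ne_bwd (hK : IsSymmConvexBody K) {θ β γ : ℝ} (hnA : pp K θ ∉ Auerbach K)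
    (h1 : θ - π < β) (h2 : β < θ) (ho1 : Orth K β θ) (ho2 : Orth K γ β) : γ ≠ θ - π := by
  intro hγ
  subst hγ
  apply hnA
  refine ⟨pp_frontier hK θ, pp K β, pp_frontier hK β, ?_, ho1⟩
  have h3 := borth_neg_left hK ho2
  rw [pp_sub_pi hK θ, neg_neg] at h3
  exact h3

theorem bothNull (hK : IsSymmConvexBody K) (hμ : IsBMeasure K μ) {θ : ℝ}
    (hnA : pp K θ ∉ Auerbach K) : LeftNull K μ θ ∧ RightNull K μ θ := by
  have hπ := Real.pi_pos
  by_cases hfgt : ∃ β γ, (θ < β ∧ β < θ+π ∧ β < γ ∧ γ < β+π ∧ Orth K θ β ∧ Orth K β γ) ∧ θ+π < γ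
  · obtain ⟨β₀, γ₀, ⟨c1, c2, c3, c4, c5, c6⟩, hgt⟩ := hfgt
    have hR : RightNull K μ θ := fwd_gt_rightNull hK hμ c1 c2 c3 c4 hgt c5 c6
    by_cases hflt : ∃ β γ, (θ < β ∧ β < θ+π ∧ β < γ ∧ γ < β+π ∧ Orth K θ β ∧ Orth K β γ) ∧ γ < θ+π
    · obtain ⟨β₁, γ₁, ⟨d1, d2, d3, d4, d5, d6⟩, hlt⟩ := hflt
      exact ⟨fwd_lt_leftNull hK hμ d1 d2 d3 d4 hlt d5 d6, hR⟩
    · have hA : ∀ β γ, θ < β → β < θ+π → β < γ → γ < β+π → Orth K θ β → Orth K β γ → θ+π < γ := by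
        intro β γ e1 e2 e3 e4 e5 e6
        rcases lt_trichotomy γ (θ+π) with h | h | h
        · exact absurd ⟨β, γ, ⟨e1, e2, e3, e4, e5, e6⟩, h⟩ hflt
        · exact absurd h (chain_ne_fwd hK hnA e1 e2 e5 e6)
        · exact h
      by_cases hblt : ∃ β γ, (θ-π < β ∧ β < θ ∧ β-π < γ ∧ γ < β ∧ Orth K β θ ∧ Orth K γ β) ∧ γ < θ-π
      · obtain ⟨β₁, γ₁, ⟨d1, d2, d3, d4, d5, d6⟩, hlt⟩ := hblt
        exact ⟨bwd_lt_leftNull hK hμ d1 d2 d3 d4 hlt d5 d6, hR⟩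
      · have hB : ∀ β γ, θ-π < β → β < θ → β-π < γ → γ < β → Orth K β θ → Orth K γ β → θ-π < γ := by
          intro β γ e1 e2 e3 e4 e5 e6
          rcases lt_trichotomy γ (θ-π) with h | h | h
          · exact absurd ⟨β, γ, ⟨e1, e2, e3, e4, e5, e6⟩, h⟩ hblt
          · exact absurd h (chain_ne_bwd hK hnA e1 e2 e5 e6)
          · exact h
        exact absurd (contra2 hK θ hA hB) (fun h => h)
  · have hA : ∀ β γ, θ < β → β < θ+π → β < γ → γ < β+π → Orth K θ β → Orth K β γ → γ < θ+π := by
      intro β γ e1 e2 e3 e4 e5 e6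
      rcases lt_trichotomy γ (θ+π) with h | h | h
      · exact h
      · exact absurd h (chain_ne_fwd hK hnA e1 e2 e5 e6)
      · exact absurd ⟨β, γ, ⟨e1, e2, e3, e4, e5, e6⟩, h⟩ hfgt
    obtain ⟨β, ⟨hβ1, hβ2⟩, hoβ⟩ := orth_exists_fwd hK θ
    obtain ⟨γ, ⟨hγ1, hγ2⟩, hoγ⟩ := orth_exists_fwd hK β
    have hL : LeftNull K μ θ :=
      fwd_lt_leftNull hK hμ hβ1 hβ2 hγ1 hγ2 (hA β γ hβ1 hβ2 hγ1 hγ2 hoβ hoγ) hoβ hoγ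
    by_cases hbgt : ∃ β γ, (θ-π < β ∧ β < θ ∧ β-π < γ ∧ γ < β ∧ Orth K β θ ∧ Orth K γ β) ∧ θ-π < γ
    · obtain ⟨β₁, γ₁, ⟨d1, d2, d3, d4, d5, d6⟩, hgt⟩ := hbgt
      exact ⟨hL, bwd_gt_rightNull hK hμ d1 d2 d3 d4 hgt d5 d6⟩
    · have hB : ∀ β γ, θ-π < β → β < θ → β-π < γ → γ < β → Orth K β θ → Orth K γ β → γ < θ-π := by
        intro β γ e1 e2 e3 e4 e5 e6
        rcases lt_trichotomy γ (θ-π) with h | h | h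
        · exact h
        · exact absurd h (chain_ne_bwd hK hnA e1 e2 e5 e6)
        · exact absurd ⟨β, γ, ⟨e1, e2, e3, e4, e5, e6⟩, h⟩ hbgt
      exact absurd (contra1 hK θ hA hB) (fun h => h)

theorem main_supp (hK : IsSymmConvexBody K) (hμ : IsBMeasure K μ) :
    msupp μ ⊆ Auerbach K := by
  intro x hx
  have hπ := Real.pi_pos
  -- x is on the frontier
  have hxf : x ∈ frontier K := by
    by_contra hxf
    have h1 := hx (frontier K)ᶜ (isClosed_frontier).isOpen_compl hxf
    rw [hμ.1.2.1] at h1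
    exact lt_irrefl _ h1
  obtain ⟨θ, hθ⟩ := pp_surj hK hxf
  by_contra hnA
  rw [← hθ] at hnA
  obtain ⟨⟨l, hl1, hl2, hlnull⟩, ⟨r, hr1, hr2, hrnull⟩⟩ := bothNull hK hμ hnA
  -- the open set
  set U : Set Plane := (pp K '' Icc r (l + 2*π))ᶜ with hU
  have hUopen : IsOpen U := (isCompact_Icc.image (pp_cont hK)).isClosed.isOpen_compl
  have hxU : x ∈ U := by
    rw [hU, mem_compl_iff]
    rintro ⟨s, hs, hsx⟩
    rw [← hθ] at hsx
    obtain ⟨n, hn⟩ := pp_inj hK hsx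
    -- s = θ + n·2π with s - θ ∈ [r - θ, l + 2π - θ] ⊂ (0, 2π)
    have hb1 : 0 < s - θ := by linarith [hs.1]
    have hb2 : s - θ < 2*π := by linarith [hs.2]
    rcases lt_trichotomy n 0 with h | h | h
    · have h5 : n ≤ -1 := by omega
      have : (n:ℝ) ≤ -1 := by exact_mod_cast h5
      nlinarith
    · subst h; simp at hn; linarith
    · have h5 : (1:ℤ) ≤ n := h
      have : (1:ℝ) ≤ (n:ℝ) := by exact_mod_cast h5
      nlinarith
  have hUnull : μ U = 0 := by
    have hsub : U ⊆ (frontier K)ᶜ ∪ Arc K l r := by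
      intro z hz
      by_cases hzf : z ∈ frontier K
      · right
        have hzarc : z ∈ Arc K l (l + 2*π) := by
          rw [← frontier_eq_arc hK l]; exact hzf
        rw [← arc_union hK (show l ≤ r by linarith) (show r ≤ l + 2*π by linarith)] at hzarc
        rcases hzarc with h | h
        · exact h
        · exact absurd h hz
      · left; exact hzf
    have h1 : μ (Arc K l r) = 0 := by
      rw [measure_arc_split hK hμ (show l ≤ θ by linarith) (show θ ≤ r by linarith)
        (by linarith), hlnull, hrnull, add_zero]
    apply le_antisymm ?_ zero_le
    calc μ U ≤ μ ((frontier K)ᶜ ∪ Arc K l r) := measure_mono hsub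
    _ ≤ μ ((frontier K)ᶜ) + μ (Arc K l r) := measure_union_le _ _
    _ = 0 := by rw [hμ.1.2.1, h1, add_zero]
  have := hx U hUopen hxU
  rw [hUnull] at this
  exact lt_irrefl _ this


end BP

/-- The support of a B-measure is contained in the set of Auerbach points. -/
theorem stmt_2 (K : Set Plane) (hK : IsSymmConvexBody K)
    (μ : Measure Plane) (hμ : IsBMeasure K μ) :
    msupp μ ⊆ Auerbach K :=
  BP.main_supp hK hμ
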